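/- For every finite simple graph G, the LD-numbers of G and of its complement Ḡ differ by at most one, i.e., γ^LD(Ḡ) ≤ γ^LD(G) + 1 and γ^LD(G) ≤ γ^LD(Ḡ) + 1. -/

import Mathlib

open Finset

namespace SepDom

variable {V : Type*} [Fintype V] [DecidableEq V]

/-- The closed neighborhood `N[v]` of a vertex as a `Finset`. -/
def closedNbhd (G : SimpleGraph V) [DecidableRel G.Adj] (v : V) : Finset V :=
  insert v (G.neighborFinset v)

/-- `C` is a dominating set: `N[v] ∩ C ≠ ∅` for all `v`. -/
def IsDomSet (G : SimpleGraph V) [DecidableRel G.Adj] (C : Finset V) : Prop :=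
  ∀ v : V, (closedNbhd G v ∩ C).Nonempty

/-- `C` is a total-dominating set: `N(v) ∩ C ≠ ∅` for all `v`. -/
def IsTotalDomSet (G : SimpleGraph V) [DecidableRel G.Adj] (C : Finset V) : Prop :=
  ∀ v : V, (G.neighborFinset v ∩ C).Nonempty

/-- `C` is a locating set (L-set): the sets `N(v) ∩ C`, `v ∉ C`, are pairwise distinct. -/
def IsLSet (G : SimpleGraph V) [DecidableRel G.Adj] (C : Finset V) : Prop :=
  ∀ u ∉ C, ∀ v ∉ C, G.neighborFinset u ∩ C = G.neighborFinset v ∩ C → u = v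

/-- `C` is an open-separating set (O-set): the sets `N(v) ∩ C` are pairwise distinct. -/
def IsOSet (G : SimpleGraph V) [DecidableRel G.Adj] (C : Finset V) : Prop :=
  ∀ u v : V, G.neighborFinset u ∩ C = G.neighborFinset v ∩ C → u = v

/-- `C` is a closed-separating set (I-set): the sets `N[v] ∩ C` are pairwise distinct. -/
def IsISet (G : SimpleGraph V) [DecidableRel G.Adj] (C : Finset V) : Prop :=
  ∀ u v : V, closedNbhd G u ∩ C = closedNbhd G v ∩ C → u = v

/-- `C` is a full-separating set (F-set): both open- and closed-separating. -/
def IsFSet (G : SimpleGraph V) [DecidableRel G.Adj] (C : Finset V) : Prop :=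
  IsOSet G C ∧ IsISet G C

/-- `G` has open twins: distinct non-adjacent vertices with equal open neighborhoods. -/
def HasOpenTwins (G : SimpleGraph V) [DecidableRel G.Adj] : Prop :=
  ∃ u v : V, u ≠ v ∧ ¬ G.Adj u v ∧ G.neighborFinset u = G.neighborFinset v

/-- `G` has closed twins: distinct adjacent vertices with equal closed neighborhoods. -/
def HasClosedTwins (G : SimpleGraph V) [DecidableRel G.Adj] : Prop :=
  ∃ u v : V, u ≠ v ∧ G.Adj u v ∧ closedNbhd G u = closedNbhd G v

/-- `G` has an isolated vertex: a vertex with empty open neighborhood. -/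
def HasIsolated (G : SimpleGraph V) [DecidableRel G.Adj] : Prop :=
  ∃ v : V, G.neighborFinset v = ∅

/-- The L-number: minimum cardinality of an L-set. -/
noncomputable def lNum (G : SimpleGraph V) [DecidableRel G.Adj] : ℕ :=
  sInf {n | ∃ C : Finset V, IsLSet G C ∧ C.card = n}

/-- The O-number: minimum cardinality of an O-set. -/
noncomputable def oNum (G : SimpleGraph V) [DecidableRel G.Adj] : ℕ :=
  sInf {n | ∃ C : Finset V, IsOSet G C ∧ C.card = n}

/-- The I-number: minimum cardinality of an I-set. -/
noncomputable def iNum (G : SimpleGraph V) [DecidableRel G.Adj] : ℕ :=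
  sInf {n | ∃ C : Finset V, IsISet G C ∧ C.card = n}

/-- The F-number: minimum cardinality of an F-set. -/
noncomputable def fNum (G : SimpleGraph V) [DecidableRel G.Adj] : ℕ :=
  sInf {n | ∃ C : Finset V, IsFSet G C ∧ C.card = n}

/-- The LD-number: minimum cardinality of an LD-code. -/
noncomputable def ldNum (G : SimpleGraph V) [DecidableRel G.Adj] : ℕ :=
  sInf {n | ∃ C : Finset V, IsDomSet G C ∧ IsLSet G C ∧ C.card = n}

/-- The OD-number: minimum cardinality of an OD-code. -/
noncomputable def odNum (G : SimpleGraph V) [DecidableRel G.Adj] : ℕ :=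
  sInf {n | ∃ C : Finset V, IsDomSet G C ∧ IsOSet G C ∧ C.card = n}

/-- The ID-number: minimum cardinality of an ID-code. -/
noncomputable def idNum (G : SimpleGraph V) [DecidableRel G.Adj] : ℕ :=
  sInf {n | ∃ C : Finset V, IsDomSet G C ∧ IsISet G C ∧ C.card = n}

/-- The FD-number: minimum cardinality of an FD-code. -/
noncomputable def fdNum (G : SimpleGraph V) [DecidableRel G.Adj] : ℕ :=
  sInf {n | ∃ C : Finset V, IsDomSet G C ∧ IsFSet G C ∧ C.card = n}

/-- The LTD-number: minimum cardinality of an LTD-code. -/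
noncomputable def ltdNum (G : SimpleGraph V) [DecidableRel G.Adj] : ℕ :=
  sInf {n | ∃ C : Finset V, IsTotalDomSet G C ∧ IsLSet G C ∧ C.card = n}

/-- The OTD-number: minimum cardinality of an OTD-code. -/
noncomputable def otdNum (G : SimpleGraph V) [DecidableRel G.Adj] : ℕ :=
  sInf {n | ∃ C : Finset V, IsTotalDomSet G C ∧ IsOSet G C ∧ C.card = n}

/-- The ITD-number: minimum cardinality of an ITD-code. -/
noncomputable def itdNum (G : SimpleGraph V) [DecidableRel G.Adj] : ℕ :=
  sInf {n | ∃ C : Finset V, IsTotalDomSet G C ∧ IsISet G C ∧ C.card = n}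

/-- The FTD-number: minimum cardinality of an FTD-code. -/
noncomputable def ftdNum (G : SimpleGraph V) [DecidableRel G.Adj] : ℕ :=
  sInf {n | ∃ C : Finset V, IsTotalDomSet G C ∧ IsFSet G C ∧ C.card = n}

end SepDom

open SepDom

lemma ld_aux {V : Type*} [Fintype V] [DecidableEq V]
    (G H : SimpleGraph V) [DecidableRel G.Adj] [DecidableRel H.Adj]
    (hadj : ∀ u v, H.Adj u v ↔ u ≠ v ∧ ¬ G.Adj u v) :
    ldNum H ≤ ldNum G + 1 := by
  have hne : {n | ∃ C : Finset V, IsDomSet G C ∧ IsLSet G C ∧ C.card = n}.Nonempty := by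
    refine ⟨(Finset.univ : Finset V).card, Finset.univ, ?_, ?_, rfl⟩
    · intro v
      exact ⟨v, by simp [closedNbhd]⟩
    · intro u hu; simp at hu
  obtain ⟨C, hdom, hloc, hcard⟩ := Nat.sInf_mem hne
  -- trace identity: for u ∉ C, N_H(u) ∩ C = C \ (N_G(u) ∩ C)
  have key : ∀ u : V, u ∉ C → H.neighborFinset u ∩ C = C \ (G.neighborFinset u ∩ C) := by
    intro u hu
    ext w
    simp only [Finset.mem_inter, SimpleGraph.mem_neighborFinset, Finset.mem_sdiff]
    constructor
    · rintro ⟨ha, hw⟩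
      rw [hadj] at ha
      exact ⟨hw, fun ⟨hg, _⟩ => ha.2 hg⟩
    · rintro ⟨hw, hna⟩
      refine ⟨(hadj u w).2 ⟨fun h => hu (h ▸ hw), fun hg => hna ⟨hg, hw⟩⟩, hw⟩
  have hlocH : IsLSet H C := by
    intro u hu v hv h
    rw [key u hu, key v hv] at h
    apply hloc u hu v hv
    have h1 : G.neighborFinset u ∩ C ⊆ C := Finset.inter_subset_right
    have h2 : G.neighborFinset v ∩ C ⊆ C := Finset.inter_subset_right
    rw [← Finset.sdiff_sdiff_eq_self h1, ← Finset.sdiff_sdiff_eq_self h2, h]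
  -- a vertex undominated in H has full G-trace
  have fullTrace : ∀ x : V, closedNbhd H x ∩ C = ∅ →
      x ∉ C ∧ G.neighborFinset x ∩ C = C := by
    intro x hx
    have hxC : x ∉ C := by
      intro hxC
      have : x ∈ closedNbhd H x ∩ C := by
        simp [closedNbhd, hxC]
      simp [hx] at this
    refine ⟨hxC, ?_⟩
    apply Finset.Subset.antisymm Finset.inter_subset_right
    intro c hc
    have hcne : c ≠ x := fun h => hxC (h ▸ hc)
    have hnH : ¬ H.Adj x c := by
      intro hH
      have : c ∈ closedNbhd H x ∩ C := by
        simp [closedNbhd, hc, SimpleGraph.mem_neighborFinset, hH]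
      simp [hx] at this
    rw [hadj] at hnH
    push_neg at hnH
    exact Finset.mem_inter.2 ⟨(SimpleGraph.mem_neighborFinset _ _ _).2 (hnH hcne.symm), hc⟩
  have hcard' : C.card = ldNum G := hcard
  by_cases hDH : IsDomSet H C
  · have : ldNum H ≤ C.card := Nat.sInf_le ⟨C, hDH, hlocH, rfl⟩
    omega
  · simp only [IsDomSet, not_forall] at hDH
    obtain ⟨v, hv⟩ := hDH
    have hvempty : closedNbhd H v ∩ C = ∅ := Finset.not_nonempty_iff_eq_empty.1 hv
    obtain ⟨hvC, hvfull⟩ := fullTrace v hvempty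
    set C' := insert v C with hC'
    have hdomH : IsDomSet H C' := by
      intro w
      by_cases hwC : w ∈ C'
      · exact ⟨w, Finset.mem_inter.2 ⟨by simp [closedNbhd], hwC⟩⟩
      · have hwC0 : w ∉ C := fun h => hwC (Finset.mem_insert_of_mem h)
        have hwv : w ≠ v := fun h => hwC (h ▸ Finset.mem_insert_self v C)
        by_contra hcon
        have hempty : closedNbhd H w ∩ C = ∅ := by
          rw [Finset.not_nonempty_iff_eq_empty] at hcon
          have : closedNbhd H w ∩ C ⊆ closedNbhd H w ∩ C' :=
            Finset.inter_subset_inter_left (Finset.subset_insert v C)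
          rw [hcon] at this
          exact Finset.subset_empty.1 this
        obtain ⟨hwC', hwfull⟩ := fullTrace w hempty
        exact hwv (hloc w hwC0 v hvC (by rw [hwfull, hvfull]))
    have hlocH' : IsLSet H C' := by
      intro u hu w hw h
      have hu0 : u ∉ C := fun h' => hu (Finset.mem_insert_of_mem h')
      have hw0 : w ∉ C := fun h' => hw (Finset.mem_insert_of_mem h')
      apply hlocH u hu0 w hw0
      have h2 := congrArg (· ∩ C) h
      simp only [Finset.inter_assoc,
        Finset.inter_eq_right.mpr (Finset.subset_insert v C)] at h2
      rwa [show C' ∩ C = C from Finset.inter_eq_right.mpr (Finset.subset_insert v C)] at h2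
    have : ldNum H ≤ C'.card := Nat.sInf_le ⟨C', hdomH, hlocH', rfl⟩
    have hle : C'.card ≤ C.card + 1 := Finset.card_insert_le v C
    omega

theorem ld_compl_diff_le_one {V : Type*} [Fintype V] [DecidableEq V]
    (G : SimpleGraph V) [DecidableRel G.Adj] :
    ldNum Gᶜ ≤ ldNum G + 1 ∧ ldNum G ≤ ldNum Gᶜ + 1 := by
  constructor
  · exact ld_aux G Gᶜ (fun u v => SimpleGraph.compl_adj G u v)
  · refine ld_aux Gᶜ G (fun u v => ?_)
    simp only [SimpleGraph.compl_adj, not_and, not_not]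
    constructor
    · intro h
      exact ⟨h.ne, fun _ => h⟩
    · rintro ⟨hne, h⟩
      exact h hne
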